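/- Let R be a commutative local ℂ-algebra with dim_ℂ R = n+2 (n ≥ 1) and maximal ideal 𝔪_R. If 𝔪_R² ≠ 0, then there exist elements a₁, …, aₙ ∈ 𝔪_R that are linearly independent over ℂ and generate R as a unital ℂ-algebra. -/

import Mathlib

open Module Submodule

/-- A submodule of prescribed finrank between two given submodules. -/
lemma stmt4_aux_between {K V : Type*} [Field K] [AddCommGroup V] [Module K V]
    [FiniteDimensional K V] (U W : Submodule K V) (hUW : U ≤ W) (m : ℕ)
    (h1 : finrank K U ≤ m) (h2 : m ≤ finrank K W) :
    ∃ S : Submodule K V, U ≤ S ∧ S ≤ W ∧ finrank K S = m := by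
  obtain ⟨j, rfl⟩ := Nat.exists_eq_add_of_le h1
  induction j with
  | zero => exact ⟨U, le_rfl, hUW, rfl⟩
  | succ j ih =>
    have h3 : finrank K ↥U + j ≤ finrank K ↥W := by omega
    obtain ⟨S, hUS, hSW, hS⟩ := ih (Nat.le_add_right _ _) h3
    have hlt : S < W := by
      refine lt_of_le_of_ne hSW ?_
      rintro rfl
      omega
    obtain ⟨x, hxW, hxS⟩ := SetLike.exists_of_lt hlt
    have hx0 : x ≠ 0 := fun h => hxS (h ▸ S.zero_mem)
    have hinf : S ⊓ span K {x} = ⊥ := by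
      rw [eq_bot_iff]
      rintro y ⟨hyS, hysp⟩
      obtain ⟨c, rfl⟩ := Submodule.mem_span_singleton.1 hysp
      rcases eq_or_ne c 0 with rfl | hc
      · simp
      · exact absurd (by simpa [hc] using S.smul_mem c⁻¹ hyS) hxS
    have hsum := Submodule.finrank_sup_add_finrank_inf_eq S (span K {x})
    rw [hinf, finrank_bot, finrank_span_singleton hx0, hS] at hsum
    exact ⟨S ⊔ span K {x}, le_trans hUS le_sup_left,
      sup_le hSW (by simpa [Submodule.span_le] using hxW), by omega⟩

set_option maxHeartbeats 1000000 in
lemma stmt4_aux_adjoin {K R : Type*} [Field K] [CommRing R] [Algebra K R]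
    (A : Subalgebra K R) (M S X : Submodule K R) (k : ℕ)
    (hSA : S ≤ Subalgebra.toSubmodule A) (hSM : S ≤ M) (hXle : X ≤ M)
    (hSX : S ⊔ X = M) (hXM2 : X ≤ M * M) (hz : M ^ (k + 1) = ⊥) :
    M ≤ Subalgebra.toSubmodule A := by
  set A' : Submodule K R := Subalgebra.toSubmodule A with hA'def
  have hAA : A' * A' ≤ A' := Submodule.mul_le.2 fun x hx y hy => A.mul_mem hx hy
  have hbase : M ≤ A' ⊔ M * M :=
    le_trans hSX.symm.le (sup_le (hSA.trans le_sup_left) (hXM2.trans le_sup_right))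
  have hP : ∀ j : ℕ, M ^ (j + 1) ≤ A' ⊔ M ^ (j + 2) := by
    intro j
    induction j with
    | zero => simpa [pow_one, pow_two] using hbase
    | succ j ih =>
      have step : M ^ (j + 2) = M ^ (j + 1) * S ⊔ M ^ (j + 1) * X := by
        rw [← Submodule.mul_sup, hSX, ← pow_succ]
      rw [step]
      refine sup_le ?_ ?_
      · calc M ^ (j + 1) * S ≤ (A' ⊔ M ^ (j + 2)) * S := mul_le_mul' ih le_rfl
          _ = A' * S ⊔ M ^ (j + 2) * S := Submodule.sup_mul _ _ _
          _ ≤ A' ⊔ M ^ (j + 3) := by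
              refine sup_le_sup ?_ ?_
              · exact le_trans (mul_le_mul' le_rfl hSA) hAA
              · rw [pow_succ (n := j + 2)]
                exact mul_le_mul' le_rfl hSM
      · refine le_trans ?_ (le_sup_right : M ^ (j + 3) ≤ A' ⊔ M ^ (j + 3))
        calc M ^ (j + 1) * X ≤ M ^ (j + 1) * (M * M) := mul_le_mul' le_rfl hXM2
          _ = M ^ (j + 3) := by rw [← mul_assoc, ← pow_succ, ← pow_succ]
  have hQ : ∀ j : ℕ, M ≤ A' ⊔ M ^ (j + 1) := by
    intro j
    induction j with
    | zero => simpa [pow_one] using (le_sup_right : M ≤ A' ⊔ M)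
    | succ j ih =>
      refine le_trans ih ?_
      refine le_trans (sup_le_sup_left (hP j) A') ?_
      rw [← sup_assoc, sup_idem]
  have hQk := hQ k
  rwa [hz, sup_bot_eq] at hQk

set_option maxHeartbeats 1000000 in
theorem stmt4 (n : ℕ) (hn : 1 ≤ n) (R : Type) [CommRing R] [IsLocalRing R] [Algebra ℂ R]
    (hdim : Module.finrank ℂ R = n + 2)
    (hm2 : (IsLocalRing.maximalIdeal R) ^ 2 ≠ ⊥) :
    ∃ a : Fin n → R,
      (∀ i, a i ∈ IsLocalRing.maximalIdeal R) ∧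
      LinearIndependent ℂ a ∧
      Algebra.adjoin ℂ (Set.range a) = ⊤ := by
  haveI hFD : FiniteDimensional ℂ R :=
    Module.finite_of_finrank_pos (by omega : 0 < finrank ℂ R)
  haveI : Nontrivial R := Module.nontrivial_of_finrank_pos (R := ℂ) (by omega)
  set 𝔪 : Ideal R := IsLocalRing.maximalIdeal R with h𝔪
  set M : Submodule ℂ R := 𝔪.restrictScalars ℂ with hMdef
  set X : Submodule ℂ R := (𝔪 ^ 2).restrictScalars ℂ with hXdef
  -- residue field is ℂ
  haveI : Module.Finite ℂ (R ⧸ 𝔪) :=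
    Module.Finite.of_surjective (Ideal.Quotient.mkₐ ℂ 𝔪).toLinearMap
      (Ideal.Quotient.mkₐ_surjective ℂ 𝔪)
  haveI : Algebra.IsIntegral ℂ (R ⧸ 𝔪) := Algebra.IsIntegral.of_finite ℂ _
  have hsurj : Function.Surjective (algebraMap ℂ (R ⧸ 𝔪)) :=
    IsAlgClosed.algebraMap_bijective_of_isIntegral.2
  -- R = ℂ·1 ⊕ 𝔪
  have htop : (span ℂ {(1 : R)}) ⊔ M = ⊤ := by
    rw [eq_top_iff]
    intro r _
    obtain ⟨c, hc⟩ := hsurj (Ideal.Quotient.mk 𝔪 r)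
    have hmem : r - algebraMap ℂ R c ∈ 𝔪 := by
      have h1 : Ideal.Quotient.mk 𝔪 (algebraMap ℂ R c) = algebraMap ℂ (R ⧸ 𝔪) c := by
        rw [IsScalarTower.algebraMap_apply ℂ R (R ⧸ 𝔪), Ideal.Quotient.algebraMap_eq]
      have h2 : Ideal.Quotient.mk 𝔪 (r - algebraMap ℂ R c) = 0 := by
        rw [map_sub, h1, hc, sub_self]
      exact (Ideal.Quotient.eq_zero_iff_mem).1 h2
    have hr : r = algebraMap ℂ R c + (r - algebraMap ℂ R c) := by ring
    rw [hr]
    refine Submodule.add_mem_sup ?_ hmem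
    rw [Algebra.algebraMap_eq_smul_one]
    exact Submodule.smul_mem _ _ (Submodule.mem_span_singleton_self 1)
  -- finrank of M is n + 1
  have hMne : M ≠ ⊤ := by
    intro h
    have h1 : (1 : R) ∈ 𝔪 := by
      have : (1 : R) ∈ M := h ▸ Submodule.mem_top
      exact this
    exact (IsLocalRing.maximalIdeal.isMaximal R).ne_top
      (Ideal.eq_top_of_isUnit_mem _ h1 isUnit_one)
  have hMlt : finrank ℂ M < n + 2 := by
    rw [← hdim]
    exact Submodule.finrank_lt hMne
  have hMge : n + 1 ≤ finrank ℂ M := by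
    have hsum := Submodule.finrank_sup_add_finrank_inf_eq (span ℂ {(1 : R)}) M
    rw [htop, finrank_top, hdim, finrank_span_singleton (one_ne_zero : (1 : R) ≠ 0)] at hsum
    omega
  have hMrank : finrank ℂ M = n + 1 := by omega
  -- X ≤ M and X ≠ ⊥
  have hXle : X ≤ M := fun x hx => Ideal.pow_le_self two_ne_zero hx
  have hXbot : X ≠ ⊥ := fun h => hm2 ((Submodule.restrictScalars_eq_bot_iff ℂ R R).1 h)
  have hXpos : 0 < finrank ℂ X := by
    rcases Submodule.exists_mem_ne_zero_of_ne_bot hXbot with ⟨x, hx, hx0⟩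
    haveI : Nontrivial X := ⟨⟨⟨x, hx⟩, 0, by simpa using hx0⟩⟩
    exact Module.finrank_pos
  -- complement of X inside M
  obtain ⟨C, hC⟩ := Submodule.exists_isCompl X
  set U : Submodule ℂ R := C ⊓ M with hUdef
  have hUX : X ⊔ U = M := by
    rw [hUdef, ← sup_inf_assoc_of_le C hXle, hC.codisjoint.eq_top, top_inf_eq]
  have hUXinf : U ⊓ X = ⊥ := by
    rw [eq_bot_iff]
    intro y hy
    exact (hC.disjoint.le_bot : X ⊓ C ≤ ⊥) ⟨hy.2, hy.1.1⟩
  have hUrank : finrank ℂ U + finrank ℂ X = n + 1 := by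
    have hsum := Submodule.finrank_sup_add_finrank_inf_eq U X
    rw [hUXinf, finrank_bot, sup_comm, hUX, hMrank] at hsum
    omega
  -- pick S with U ≤ S ≤ M of finrank n
  obtain ⟨S, hUS, hSM, hSrank⟩ := stmt4_aux_between U M inf_le_right n (by omega) (by omega)
  have hSX : S ⊔ X = M := by
    refine le_antisymm (sup_le hSM hXle) ?_
    rw [← hUX]
    exact sup_le le_sup_right (le_trans hUS le_sup_left)
  -- the n elements
  let b : Basis (Fin n) ℂ ↥S := Module.finBasisOfFinrankEq ℂ ↥S hSrank
  refine ⟨fun i => (b i : R), fun i => hSM (b i).2, ?_, ?_⟩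
  · exact (b.linearIndependent).map' S.subtype (Submodule.ker_subtype S)
  · -- generation
    set A : Subalgebra ℂ R := Algebra.adjoin ℂ (Set.range fun i => ((b i : R))) with hAdef
    set A' : Submodule ℂ R := Subalgebra.toSubmodule A with hA'def
    have hspan : span ℂ (Set.range fun i => ((b i : R))) = S := by
      have himg : (Set.range fun i => ((b i : R))) = S.subtype '' Set.range b := by
        rw [← Set.range_comp]; rfl
      rw [himg, Submodule.span_image, b.span_eq, Submodule.map_subtype_top]
    have hSA : S ≤ A' := by
      rw [← hspan]
      exact Submodule.span_le.2 Algebra.subset_adjoin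
    -- nilpotency of 𝔪
    haveI : IsArtinianRing R := isArtinian_of_tower ℂ inferInstance
    obtain ⟨k, hk⟩ := IsArtinianRing.isNilpotent_jacobson_bot (R := R)
    have hmk : 𝔪 ^ k = ⊥ := by
      rwa [IsLocalRing.jacobson_eq_maximalIdeal ⊥ bot_ne_top] at hk
    -- powers of M vs powers of 𝔪
    have hpow : ∀ j : ℕ, M ^ j ≤ ((𝔪 ^ j).restrictScalars ℂ : Submodule ℂ R) := by
      intro j
      induction j with
      | zero => simpa using le_top
      | succ j ih =>
        rw [pow_succ, pow_succ]
        exact Submodule.mul_le.2 fun x hx y hy => Ideal.mul_mem_mul (ih hx) hy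
    have hXM2 : X ≤ M * M := by
      intro x hx
      have hx' : x ∈ 𝔪 * 𝔪 := by rwa [← sq]
      exact Submodule.mul_induction_on hx'
        (fun m hm y hy => Submodule.mul_mem_mul hm hy)
        (fun a c ha hc => add_mem ha hc)
    have hz : M ^ (k + 1) = ⊥ := by
      refine le_bot_iff.1 (le_trans (hpow (k + 1)) ?_)
      rw [pow_succ, hmk, bot_mul]
      simp
    have hMA : M ≤ A' := stmt4_aux_adjoin A M S X k hSA hSM hXle hSX hXM2 hz
    have hTA : (⊤ : Submodule ℂ R) ≤ A' := by
      rw [← htop]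
      refine sup_le ?_ hMA
      exact Submodule.span_le.2 (Set.singleton_subset_iff.2 A.one_mem)
    have hAtop : A' = ⊤ := top_le_iff.1 hTA
    exact Subalgebra.toSubmodule_injective (by rw [← hA'def, hAtop, Algebra.top_toSubmodule])
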